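/- Let 1 < q ≤ p < ∞ and f ∈ M^p_q(ℝⁿ). For any measurable set E ⊆ ℝⁿ, ∫_E |f(x)| dx ≤ H^{1/p'}_∞(E) · ‖f‖_{M^p_q}, where H^{1/p'}_∞ is the Hausdorff content of dimension parameter 1/p'. -/

import Mathlib

open MeasureTheory ENNReal Set Filter

/-- The open axis-parallel cube with corner `a` and side length `s`. -/
noncomputable def cube (n : ℕ) (a : Fin n → ℝ) (s : ℝ) : Set (Fin n → ℝ) :=
  Set.univ.pi fun i => Set.Ioo (a i) (a i + s)

/-- The Morrey norm `‖f‖_{M^p_q}` on `ℝⁿ`. -/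
noncomputable def morreyNorm (n : ℕ) (p q : ℝ) (f : (Fin n → ℝ) → ℝ) : ℝ≥0∞ :=
  ⨆ (a : Fin n → ℝ) (s : ℝ) (_ : 0 < s),
    ENNReal.ofReal ((s ^ n) ^ (1 / p - 1 / q)) *
      (∫⁻ x in cube n a s, ENNReal.ofReal (|f x| ^ q)) ^ (1 / q)

/-- The Hölder conjugate exponent `p' = p/(p-1)`. -/
noncomputable def conjExp (p : ℝ) : ℝ := p / (p - 1)

/-- A `(p',q')`-block: a measurable function supported on a cube `Q` with
`‖b‖_{L^{q'}} ≤ |Q|^{1/p-1/q}`. -/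
def IsBlock (n : ℕ) (p q : ℝ) (b : (Fin n → ℝ) → ℝ) : Prop :=
  Measurable b ∧ ∃ (a : Fin n → ℝ) (s : ℝ), 0 < s ∧
    Function.support b ⊆ cube n a s ∧
    (∫⁻ x, ENNReal.ofReal (|b x| ^ conjExp q)) ^ (1 / conjExp q) ≤
      ENNReal.ofReal ((s ^ n) ^ (1 / p - 1 / q))

/-- `f = ∑ₖ λₖ bₖ` a.e. with absolutely convergent coefficients and `(p',q')`-blocks. -/
def IsBlockRep (n : ℕ) (p q : ℝ) (f : (Fin n → ℝ) → ℝ) (l : ℕ → ℝ)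
    (b : ℕ → (Fin n → ℝ) → ℝ) : Prop :=
  (∀ k, IsBlock n p q (b k)) ∧ Summable (fun k => |l k|) ∧
    ∀ᵐ x : Fin n → ℝ, Summable (fun k => l k * b k x) ∧ f x = ∑' k, l k * b k x

/-- Membership in the block space `B^{p'}_{q'}(ℝⁿ)`. -/
def MemBlockSpace (n : ℕ) (p q : ℝ) (f : (Fin n → ℝ) → ℝ) : Prop :=
  ∃ l b, IsBlockRep n p q f l b

/-- The block space norm `‖f‖_{B^{p'}_{q'}}`: infimal `ℓ¹`-sum of coefficients. -/
noncomputable def blockNorm (n : ℕ) (p q : ℝ) (f : (Fin n → ℝ) → ℝ) : ℝ≥0∞ :=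
  ⨅ (l : ℕ → ℝ) (b : ℕ → (Fin n → ℝ) → ℝ) (_ : IsBlockRep n p q f l b),
    ENNReal.ofReal (∑' k, |l k|)

/-- The Hausdorff content H^d_∞ of a set: infimal Σ |Q_j|^d over countable covers by
open cubes. -/
noncomputable def hausdorffContent (n : ℕ) (d : ℝ) (E : Set (Fin n → ℝ)) : ℝ≥0∞ :=
  ⨅ (a : ℕ → Fin n → ℝ) (s : ℕ → ℝ) (_ : ∀ j, 0 < s j)
    (_ : E ⊆ ⋃ j, cube n (a j) (s j)),
    ∑' j, ENNReal.ofReal ((s j ^ n) ^ d)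

lemma volume_cube (n : ℕ) (a : Fin n → ℝ) {s : ℝ} (hs : 0 ≤ s) :
    MeasureTheory.volume (cube n a s) = ENNReal.ofReal (s ^ n) := by
  rw [cube, volume_pi_pi]
  simp [Real.volume_Ioo, ENNReal.ofReal_pow hs]

lemma cube_bound (n : ℕ) (p q : ℝ) (hq : 1 < q) (hqp : q ≤ p)
    (f : (Fin n → ℝ) → ℝ) (hf : Measurable f) (a : Fin n → ℝ) {s : ℝ} (hs : 0 < s) :
    ∫⁻ x in cube n a s, ENNReal.ofReal |f x| ≤
      ENNReal.ofReal ((s ^ n) ^ (1 - 1 / p)) * morreyNorm n p q f := by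
  have hp : 1 < p := lt_of_lt_of_le hq hqp
  have hsn : 0 < s ^ n := pow_pos hs n
  set q' := Real.conjExponent q with hq'
  have hpq : q.HolderConjugate q' := Real.HolderConjugate.conjExponent hq
  have key := ENNReal.lintegral_mul_le_Lp_mul_Lq (volume.restrict (cube n a s)) hpq
    (f := fun x => ENNReal.ofReal |f x|) (g := fun _ => 1)
    (hf.abs.ennreal_ofReal.aemeasurable) aemeasurable_const
  simp only [Pi.mul_apply, mul_one, ENNReal.one_rpow, lintegral_const,
    Measure.restrict_apply MeasurableSet.univ, Set.univ_inter] at key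
  rw [volume_cube n a hs.le] at key
  have h1q' : 1 / q' = 1 - 1 / q := by
    have := hpq.inv_add_inv_eq_one
    rw [one_div, one_div]; linarith
  have hq0 : (0:ℝ) ≤ q := by linarith
  have e1 : ∀ x : Fin n → ℝ, (ENNReal.ofReal |f x|) ^ q = ENNReal.ofReal (|f x| ^ q) :=
    fun x => ENNReal.ofReal_rpow_of_nonneg (abs_nonneg _) hq0
  simp only [e1, one_mul] at key
  have hA0 : ENNReal.ofReal (s ^ n) ≠ 0 := (ENNReal.ofReal_pos.mpr hsn).ne'
  have e2 : ENNReal.ofReal (s ^ n) ^ (1 / q') = ENNReal.ofReal ((s ^ n) ^ (1 - 1/p)) *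
      ENNReal.ofReal ((s ^ n) ^ (1/p - 1/q)) := by
    have hsum : (1:ℝ)/q' = (1 - 1/p) + (1/p - 1/q) := by rw [h1q']; ring
    rw [hsum, ENNReal.rpow_add _ _ hA0 ENNReal.ofReal_ne_top,
      ENNReal.ofReal_rpow_of_pos hsn, ENNReal.ofReal_rpow_of_pos hsn]
  rw [e2] at key
  refine key.trans ?_
  set I := ∫⁻ x in cube n a s, ENNReal.ofReal (|f x| ^ q) with hI
  have e3 : I ^ (1/q) * (ENNReal.ofReal ((s ^ n) ^ (1 - 1/p)) *
      ENNReal.ofReal ((s ^ n) ^ (1/p - 1/q))) =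
      ENNReal.ofReal ((s ^ n) ^ (1 - 1/p)) *
        (ENNReal.ofReal ((s ^ n) ^ (1/p - 1/q)) * I ^ (1/q)) := by ring
  rw [e3]
  refine mul_le_mul_right ?_ _
  rw [morreyNorm]
  exact le_iSup_of_le a (le_iSup_of_le s (le_iSup_of_le hs le_rfl))

/-- For 1 < q ≤ p and f ∈ M^p_q, for any set E,
∫_E |f| ≤ H^{1/p'}_∞(E) ‖f‖_{M^p_q}. -/
theorem stmt4 (n : ℕ) (p q : ℝ) (hq : 1 < q) (hqp : q ≤ p)
    (f : (Fin n → ℝ) → ℝ) (hf : Measurable f) (hmem : morreyNorm n p q f < ⊤)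
    (E : Set (Fin n → ℝ)) :
    ∫⁻ x in E, ENNReal.ofReal |f x| ≤
      hausdorffContent n (1 - 1 / p) E * morreyNorm n p q f := by
  rcases eq_or_ne (morreyNorm n p q f) 0 with hM0 | hM0
  · -- degenerate case : the Morrey norm vanishes, hence f = 0 a.e.
    have hcube : ∀ (a : Fin n → ℝ) (s : ℝ), 0 < s →
        ∫⁻ x in cube n a s, ENNReal.ofReal (|f x| ^ q) = 0 := by
      intro a s hs
      have hle : ENNReal.ofReal ((s ^ n) ^ (1 / p - 1 / q)) *
          (∫⁻ x in cube n a s, ENNReal.ofReal (|f x| ^ q)) ^ (1 / q) ≤ morreyNorm n p q f := by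
        rw [morreyNorm]
        exact le_iSup_of_le a (le_iSup_of_le s (le_iSup_of_le hs le_rfl))
      rw [hM0, le_zero_iff, mul_eq_zero] at hle
      have hsn : 0 < s ^ n := pow_pos hs n
      rcases hle with h | h
      · exact absurd h (ENNReal.ofReal_pos.mpr (Real.rpow_pos_of_pos hsn _)).ne'
      · rcases ENNReal.rpow_eq_zero_iff.mp h with ⟨h0, _⟩ | ⟨_, hneg⟩
        · exact h0
        · have : (0:ℝ) < 1 / q := by positivity
          linarith
    have hg : Measurable fun x => ENNReal.ofReal (|f x| ^ q) :=
      (((Real.continuous_rpow_const (by linarith : (0:ℝ) ≤ q)).measurable.comp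
        hf.abs)).ennreal_ofReal
    have hcov : (Set.univ : Set (Fin n → ℝ)) ⊆
        ⋃ m : ℕ, cube n (fun _ => -(m + 1 : ℝ)) (2 * (m + 1)) := by
      intro x _
      obtain ⟨m, hm⟩ := exists_nat_gt ‖x‖
      refine Set.mem_iUnion.mpr ⟨m, ?_⟩
      intro i _
      have hxi : |x i| ≤ ‖x‖ := by
        simpa using norm_le_pi_norm x i
      have h1 := (abs_le.mp (hxi.trans hm.le)).1
      have h2 := (abs_le.mp (hxi.trans hm.le)).2
      refine Set.mem_Ioo.mpr ?_
      show -((m:ℝ) + 1) < x i ∧ x i < -((m:ℝ) + 1) + 2 * ((m:ℝ) + 1)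
      constructor <;> linarith
    have hzero : ∫⁻ x, ENNReal.ofReal (|f x| ^ q) = 0 := by
      refine le_antisymm ?_ zero_le
      calc ∫⁻ x, ENNReal.ofReal (|f x| ^ q)
          = ∫⁻ x in Set.univ, ENNReal.ofReal (|f x| ^ q) := by rw [Measure.restrict_univ]
        _ ≤ ∫⁻ x in ⋃ m : ℕ, cube n (fun _ => -(m + 1 : ℝ)) (2 * (m + 1)),
              ENNReal.ofReal (|f x| ^ q) := lintegral_mono_set hcov
        _ ≤ ∑' m : ℕ, ∫⁻ x in cube n (fun _ => -(m + 1 : ℝ)) (2 * (m + 1)),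
              ENNReal.ofReal (|f x| ^ q) := lintegral_iUnion_le _ _
        _ = 0 := by
            simp only [fun m : ℕ => hcube (fun _ => -(m + 1 : ℝ)) (2 * (m + 1)) (by positivity)]
            exact tsum_zero
    have hfz : ∀ᵐ x : Fin n → ℝ, ENNReal.ofReal |f x| = 0 := by
      filter_upwards [(lintegral_eq_zero_iff hg).mp hzero] with x hx
      simp only [Pi.zero_apply, ENNReal.ofReal_eq_zero] at hx ⊢
      by_contra h
      push_neg at h
      have := Real.rpow_pos_of_pos h q
      linarith
    have : ∫⁻ x in E, ENNReal.ofReal |f x| = 0 := by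
      refine le_antisymm ?_ zero_le
      calc ∫⁻ x in E, ENNReal.ofReal |f x|
          ≤ ∫⁻ x, ENNReal.ofReal |f x| := setLIntegral_le_lintegral _ _
        _ = 0 := lintegral_eq_zero_iff hf.abs.ennreal_ofReal |>.mpr hfz
    exact this ▸ zero_le
  · rw [← ENNReal.div_le_iff_le_mul (Or.inl hM0) (Or.inl hmem.ne), hausdorffContent]
    refine le_iInf fun a => le_iInf fun s => le_iInf fun hs => le_iInf fun hcov => ?_
    rw [ENNReal.div_le_iff_le_mul (Or.inl hM0) (Or.inl hmem.ne)]
    calc ∫⁻ x in E, ENNReal.ofReal |f x|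
        ≤ ∫⁻ x in ⋃ j, cube n (a j) (s j), ENNReal.ofReal |f x| := lintegral_mono_set hcov
      _ ≤ ∑' j, ∫⁻ x in cube n (a j) (s j), ENNReal.ofReal |f x| := lintegral_iUnion_le _ _
      _ ≤ ∑' j, ENNReal.ofReal ((s j ^ n) ^ (1 - 1 / p)) * morreyNorm n p q f :=
          ENNReal.tsum_le_tsum fun j => cube_bound n p q hq hqp f hf (a j) (hs j)
      _ = (∑' j, ENNReal.ofReal ((s j ^ n) ^ (1 - 1 / p))) * morreyNorm n p q f :=
          ENNReal.tsum_mul_right
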